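/- Let (ℓ_j)_{j≥0} be a real sequence with ℓ_j ≥ ℓ_inf for all j, let (a_j)_{j≥0} be nonnegative reals, let (α_j)_{j≥0} be positive reals with Σ_j α_j = ∞ and Σ_j α_j² < ∞, and let U > 0 and C ≥ 0 be constants such that ℓ_{j+1} ≤ ℓ_j − U α_j a_j + C α_j² for every j. Then Σ_{j=0}^{∞} α_j a_j < ∞, and with A_K = Σ_{j=0}^{K−1} α_j one has lim_{K→∞} (1/A_K) Σ_{j=0}^{K−1} α_j a_j = 0. -/

import Mathlib

open Filter

/-- Deterministic recursion underlying the SGD convergence analysis: if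
`ℓ_{j+1} ≤ ℓ_j − U α_j a_j + C α_j²` with `ℓ` bounded below, `a_j ≥ 0`, `α_j > 0`,
`Σ α_j = ∞` and `Σ α_j² < ∞`, then `Σ α_j a_j < ∞` and the weighted Cesàro averages
`(1/A_K) Σ_{j<K} α_j a_j` tend to `0`. -/
theorem stmt_17 (ℓ a α : ℕ → ℝ) (ℓinf : ℝ)
    (hlb : ∀ j, ℓinf ≤ ℓ j)
    (ha : ∀ j, 0 ≤ a j)
    (hαpos : ∀ j, 0 < α j)
    (hdiv : ¬ Summable α) (hsq : Summable (fun j => α j ^ 2))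
    (U C : ℝ) (hU : 0 < U) (hC : 0 ≤ C)
    (hrec : ∀ j, ℓ (j + 1) ≤ ℓ j - U * α j * a j + C * α j ^ 2) :
    Summable (fun j => α j * a j) ∧
    Tendsto
      (fun K => (1 / (∑ j ∈ Finset.range K, α j)) * ∑ j ∈ Finset.range K, α j * a j)
      atTop (nhds 0) := by
  have hnn : ∀ j, 0 ≤ α j * a j := fun j => mul_nonneg (hαpos j).le (ha j)
  -- bound on partial sums
  have hkey : ∀ K, ∑ j ∈ Finset.range K, U * (α j * a j) ≤
      ℓ 0 - ℓ (K) + ∑ j ∈ Finset.range K, C * α j ^ 2 := by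
    intro K
    induction K with
    | zero => simp
    | succ n ih =>
      rw [Finset.sum_range_succ, Finset.sum_range_succ]
      have := hrec n
      nlinarith [this, ih]
  have hCsum : Summable (fun j => C * α j ^ 2) := hsq.mul_left C
  have hbdd : ∀ K, ∑ j ∈ Finset.range K, U * (α j * a j) ≤
      ℓ 0 - ℓinf + ∑' j, C * α j ^ 2 := by
    intro K
    refine (hkey K).trans ?_
    have h1 : ℓ 0 - ℓ K ≤ ℓ 0 - ℓinf := by linarith [hlb K]
    have h2 : ∑ j ∈ Finset.range K, C * α j ^ 2 ≤ ∑' j, C * α j ^ 2 :=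
      Summable.sum_le_tsum _ (fun j _ => mul_nonneg hC (sq_nonneg _)) hCsum
    linarith
  have hsumU : Summable (fun j => U * (α j * a j)) := by
    apply summable_of_sum_range_le (fun j => mul_nonneg hU.le (hnn j)) hbdd
  have hsum : Summable (fun j => α j * a j) := by
    have := hsumU.mul_left U⁻¹
    simpa [mul_assoc, inv_mul_cancel_left₀ hU.ne'] using this
  refine ⟨hsum, ?_⟩
  have hA : Tendsto (fun K => ∑ j ∈ Finset.range K, α j) atTop atTop := by
    rw [← not_summable_iff_tendsto_nat_atTop_of_nonneg (fun j => (hαpos j).le)]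
    exact hdiv
  have hNum : Tendsto (fun K => ∑ j ∈ Finset.range K, α j * a j) atTop
      (nhds (∑' j, α j * a j)) := hsum.hasSum.tendsto_sum_nat
  have hInv : Tendsto (fun K => 1 / (∑ j ∈ Finset.range K, α j)) atTop (nhds 0) := by
    simpa [one_div, Pi.inv_def] using hA.inv_tendsto_atTop
  simpa using hInv.mul hNum
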